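/- Let X be a Banach space whose norm is asymptotically uniformly convex. Then for every ε ∈ (0, 1), σ_ε(B_X) ⊆ (1 − Δ(ε))·B_X, where Δ(ε) := (1/2)·δ̄_X(ε/3). -/

import Mathlib

open Metric Set Pointwise

noncomputable section

/-- The weak topology on a normed space `X`: the initial topology with respect to all
continuous linear functionals. -/
noncomputable def weakTop (X : Type*) [NormedAddCommGroup X] [NormedSpace ℝ X] :
    TopologicalSpace X :=
  ⨅ f : X →L[ℝ] ℝ, TopologicalSpace.induced (⇑f) inferInstance

/-- A set is weakly open if it is open for the weak topology. -/
def IsWeaklyOpen {X : Type*} [NormedAddCommGroup X] [NormedSpace ℝ X] (V : Set X) : Prop :=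
  @IsOpen X (weakTop X) V

/-- The derived set `σ_ε(K)`: remove from `K` the union of all weakly open sets `V` whose
trace on `K` has (norm) diameter `< ε`. -/
noncomputable def dSet {X : Type*} [NormedAddCommGroup X] [NormedSpace ℝ X] (ε : ℝ)
    (K : Set X) : Set X :=
  K \ ⋃₀ {V : Set X | IsWeaklyOpen V ∧ Metric.diam (V ∩ K) < ε}

/-- The transfinite iterates `σ_ε^α(K)`: `σ_ε^0(K) = K`, `σ_ε^{α+1}(K) = σ_ε(σ_ε^α(K))`,
and `σ_ε^α(K) = ⋂_{β<α} σ_ε^β(K)` for `α` a limit ordinal. -/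
noncomputable def dIter {X : Type*} [NormedAddCommGroup X] [NormedSpace ℝ X] (ε : ℝ)
    (K : Set X) (α : Ordinal.{0}) : Set X :=
  Ordinal.limitRecOn α K (fun _ ih => dSet ε ih)
    (fun o _ ih => ⋂ (β : Ordinal.{0}) (h : β < o), ih β h)

/-- `Φ(X, ε)`: the least ordinal `α` with `σ_ε^α(B_X) = ∅` (junk value `0` if there is none). -/
noncomputable def PhiEps (X : Type*) [NormedAddCommGroup X] [NormedSpace ℝ X] (ε : ℝ) :
    Ordinal.{0} :=
  sInf {γ : Ordinal.{0} | dIter ε (Metric.closedBall (0 : X) 1) γ = ∅}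

/-- `Φ(X, ε)` is well defined, i.e. some derived iterate of the unit ball is empty. -/
def PhiDefinedAt (X : Type*) [NormedAddCommGroup X] [NormedSpace ℝ X] (ε : ℝ) : Prop :=
  ∃ γ : Ordinal.{0}, dIter ε (Metric.closedBall (0 : X) 1) γ = ∅

/-- `Φ(X) < ∞`, i.e. `Φ(X, ε)` is well defined for every `ε > 0`. -/
def PhiDefined (X : Type*) [NormedAddCommGroup X] [NormedSpace ℝ X] : Prop :=
  ∀ ε : ℝ, 0 < ε → PhiDefinedAt X ε

/-- The weak-fragmentability index `Φ(X) = sup_{ε > 0} Φ(X, ε)`. -/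
noncomputable def Phi (X : Type*) [NormedAddCommGroup X] [NormedSpace ℝ X] : Ordinal.{0} :=
  ⨆ ε : {ε : ℝ // 0 < ε}, PhiEps X ε.1

/-- The modulus of asymptotic uniform convexity `δ̄_X(t)`. -/
def aucMod (X : Type*) [NormedAddCommGroup X] [NormedSpace ℝ X] (t : ℝ) : ℝ :=
  ⨅ x : Metric.sphere (0 : X) 1,
    ⨆ Y : {Y : Submodule ℝ X // IsClosed (Y : Set X) ∧ FiniteDimensional ℝ (X ⧸ Y)},
      ⨅ y : Metric.sphere (0 : ↥Y.1) 1, (‖(x : X) + t • ((y : ↥Y.1) : X)‖ - 1)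

/-- A normed space is asymptotically uniformly convex (AUC) if `δ̄_X(t) > 0` for all `t > 0`. -/
def IsAUC (X : Type*) [NormedAddCommGroup X] [NormedSpace ℝ X] : Prop :=
  ∀ t : ℝ, 0 < t → 0 < aucMod X t

/-- `X` admits an equivalent asymptotically uniformly convex norm, i.e. it is isomorphic, as a
topological vector space, to an AUC normed space. -/
def AUCRenormable (X : Type u) [NormedAddCommGroup X] [NormedSpace ℝ X] : Prop :=
  ∃ (Y : Type u) (_ : NormedAddCommGroup Y) (_ : NormedSpace ℝ Y),
    Nonempty (X ≃L[ℝ] Y) ∧ IsAUC Y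



/-! ### Auxiliary lemmas -/

section AuxWeak

variable {X : Type} [NormedAddCommGroup X] [NormedSpace ℝ X]

lemma weakCont_clm (f : X →L[ℝ] ℝ) : @Continuous X ℝ (weakTop X) _ ⇑f :=
  continuous_iInf_dom (i := f) continuous_induced_dom

lemma weakCont_findim {E : Type*} [NormedAddCommGroup E] [NormedSpace ℝ E]
    [FiniteDimensional ℝ E] (f : X →L[ℝ] E) :
    @Continuous X E (weakTop X) _ ⇑f := by
  classical
  let b := Module.finBasis ℝ E
  have hcont2 : Continuous (b.equivFun.symm : (Fin (Module.finrank ℝ E) → ℝ) → E) :=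
    LinearMap.continuous_of_finiteDimensional b.equivFun.symm.toLinearMap
  let g : Fin (Module.finrank ℝ E) → (X →L[ℝ] ℝ) := fun i =>
    (LinearMap.toContinuousLinearMap (b.coord i)).comp f
  have hg : ∀ i x, g i x = b.equivFun (f x) i := by
    intro i x
    simp [g, Module.Basis.equivFun_apply, Module.Basis.coord_apply]
  letI : TopologicalSpace X := weakTop X
  have h1 : Continuous fun x : X => (fun i => g i x) :=
    continuous_pi fun i => weakCont_clm (g i)
  have h4 : ⇑f = (b.equivFun.symm : (Fin (Module.finrank ℝ E) → ℝ) → E)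
      ∘ (fun x : X => fun i => g i x) := by
    funext x
    have h5 : (fun i => g i x) = b.equivFun (f x) := funext fun i => hg i x
    simp only [Function.comp_apply, h5, LinearEquiv.symm_apply_apply]
  rw [h4]
  exact hcont2.comp h1

end AuxWeak

/-- The inner infimum in the definition of `aucMod`. -/
noncomputable def Gfun (X : Type) [NormedAddCommGroup X] [NormedSpace ℝ X] (x : X) (t : ℝ)
    (Y : {Y : Submodule ℝ X // IsClosed (Y : Set X) ∧ FiniteDimensional ℝ (X ⧸ Y)}) : ℝ :=
  ⨅ y : Metric.sphere (0 : ↥Y.1) 1, (‖x + t • ((y : ↥Y.1) : X)‖ - 1)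

/-- The supremum over finite-codimensional subspaces in the definition of `aucMod`. -/
noncomputable def Ffun (X : Type) [NormedAddCommGroup X] [NormedSpace ℝ X] (x : X) (t : ℝ) : ℝ :=
  ⨆ Y : {Y : Submodule ℝ X // IsClosed (Y : Set X) ∧ FiniteDimensional ℝ (X ⧸ Y)},
    Gfun X x t Y

section AuxMod

variable {X : Type} [NormedAddCommGroup X] [NormedSpace ℝ X]

lemma aucMod_eq_iInf_Ffun (t : ℝ) :
    aucMod X t = ⨅ x : Metric.sphere (0 : X) 1, Ffun X (x : X) t := rfl

lemma fcod_nonempty :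
    Nonempty {Y : Submodule ℝ X // IsClosed (Y : Set X) ∧ FiniteDimensional ℝ (X ⧸ Y)} := by
  refine ⟨⊤, ?_, ?_⟩
  · simp
  · haveI : Subsingleton (X ⧸ (⊤ : Submodule ℝ X)) :=
      Submodule.Quotient.subsingleton_iff.mpr rfl
    infer_instance

lemma Gfun_bddBelow (x : X) (t : ℝ)
    (Y : {Y : Submodule ℝ X // IsClosed (Y : Set X) ∧ FiniteDimensional ℝ (X ⧸ Y)}) :
    BddBelow (Set.range fun y : Metric.sphere (0 : ↥Y.1) 1 =>
      (‖x + t • ((y : ↥Y.1) : X)‖ - 1)) := by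
  refine ⟨-1, ?_⟩
  rintro r ⟨y, rfl⟩
  dsimp only
  have := norm_nonneg (x + t • ((y : ↥Y.1) : X))
  linarith

lemma Gfun_ge_neg_one (x : X) (t : ℝ)
    (Y : {Y : Submodule ℝ X // IsClosed (Y : Set X) ∧ FiniteDimensional ℝ (X ⧸ Y)}) :
    -1 ≤ Gfun X x t Y := by
  rw [Gfun]
  rcases isEmpty_or_nonempty (Metric.sphere (0 : ↥Y.1) 1) with h | h
  · rw [Real.iInf_of_isEmpty]; norm_num
  · refine le_ciInf fun y => ?_
    have := norm_nonneg (x + t • ((y : ↥Y.1) : X))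
    linarith

lemma Gfun_le (x : X) (hx : ‖x‖ = 1) {t : ℝ} (ht : 0 < t)
    (Y : {Y : Submodule ℝ X // IsClosed (Y : Set X) ∧ FiniteDimensional ℝ (X ⧸ Y)}) :
    Gfun X x t Y ≤ t := by
  rw [Gfun]
  rcases isEmpty_or_nonempty (Metric.sphere (0 : ↥Y.1) 1) with h | h
  · rw [Real.iInf_of_isEmpty]; exact ht.le
  · obtain ⟨y⟩ := h
    refine le_trans (ciInf_le (Gfun_bddBelow x t Y) y) ?_
    have hy : ‖((y : ↥Y.1) : X)‖ = 1 := by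
      have := y.2
      rw [mem_sphere_zero_iff_norm] at this
      exact this
    have h1 : ‖x + t • ((y : ↥Y.1) : X)‖ ≤ ‖x‖ + ‖t • ((y : ↥Y.1) : X)‖ := norm_add_le _ _
    rw [norm_smul, Real.norm_eq_abs, abs_of_pos ht, hy, hx] at h1
    linarith

lemma Ffun_ge_neg_one (x : X) (t : ℝ) : -1 ≤ Ffun X x t := by
  rw [Ffun]
  rcases Classical.em (BddAbove (Set.range fun Y :
      {Y : Submodule ℝ X // IsClosed (Y : Set X) ∧ FiniteDimensional ℝ (X ⧸ Y)} =>
      Gfun X x t Y)) with h | h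
  · obtain ⟨Y₀⟩ := fcod_nonempty (X := X)
    exact le_trans (Gfun_ge_neg_one x t Y₀) (le_ciSup h Y₀)
  · rw [Real.iSup_of_not_bddAbove h]; norm_num

lemma Ffun_le (x : X) (hx : ‖x‖ = 1) {t : ℝ} (ht : 0 < t) : Ffun X x t ≤ t :=
  Real.iSup_le (fun Y => Gfun_le x hx ht Y) ht.le

lemma Ffun_bddBelow (t : ℝ) :
    BddBelow (Set.range fun x : Metric.sphere (0 : X) 1 => Ffun X (x : X) t) := by
  refine ⟨-1, ?_⟩
  rintro r ⟨x, rfl⟩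
  exact Ffun_ge_neg_one _ _

lemma aucMod_le_Ffun (t : ℝ) (x : Metric.sphere (0 : X) 1) :
    aucMod X t ≤ Ffun X (x : X) t := by
  rw [aucMod_eq_iInf_Ffun]
  exact ciInf_le (Ffun_bddBelow t) x

end AuxMod

set_option maxHeartbeats 1000000 in
/-- For an asymptotically uniformly convex Banach space `X` and `ε ∈ (0,1)`,
`σ_ε(B_X) ⊆ (1 - Δ(ε))·B_X` where `Δ(ε) = δ̄_X(ε/3)/2`. -/
theorem dSet_subset_shrunk_ball (X : Type) [NormedAddCommGroup X] [NormedSpace ℝ X]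
    [CompleteSpace X] (hauc : IsAUC X) (ε : ℝ) (hε0 : 0 < ε) (hε1 : ε < 1) :
    dSet ε (Metric.closedBall (0 : X) 1) ⊆
      (1 - 2⁻¹ * aucMod X (ε / 3)) • Metric.closedBall (0 : X) 1 := by
  have ht : (0:ℝ) < ε / 3 := by linarith
  have hδ0 : 0 < aucMod X (ε / 3) := hauc _ ht
  set t : ℝ := ε / 3 with htdef
  set δ : ℝ := aucMod X t with hδdef
  -- the unit sphere of `X` is nonempty
  have hsne : Nonempty (Metric.sphere (0 : X) 1) := by
    by_contra h
    rw [not_nonempty_iff] at h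
    have h0 : aucMod X t = 0 := by
      rw [aucMod_eq_iInf_Ffun]
      exact Real.iInf_of_isEmpty _
    rw [← hδdef] at h0
    linarith
  have hδt : δ ≤ t := by
    obtain ⟨x₀⟩ := hsne
    have hx₀ : ‖(x₀ : X)‖ = 1 := by
      have := x₀.2
      rwa [mem_sphere_zero_iff_norm] at this
    exact le_trans (aucMod_le_Ffun t x₀) (Ffun_le _ hx₀ ht)
  have hδ13 : δ < 1/3 := by
    have : t < 1/3 := by rw [htdef]; linarith
    linarith
  intro x hx
  simp only [dSet, Set.mem_diff] at hx
  obtain ⟨hxB, hxN⟩ := hx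
  have hx1 : ‖x‖ ≤ 1 := by rwa [mem_closedBall_zero_iff] at hxB
  rcases le_or_gt ‖x‖ (1 - 2⁻¹ * δ) with hle | hlt
  · -- in this case `x` is in the shrunken ball
    have hc : (0:ℝ) < 1 - 2⁻¹ * δ := by linarith
    refine Set.mem_smul_set.mpr ⟨(1 - 2⁻¹ * δ)⁻¹ • x, ?_, smul_inv_smul₀ hc.ne' x⟩
    rw [mem_closedBall_zero_iff, norm_smul, norm_inv, Real.norm_eq_abs, abs_of_pos hc]
    calc (1 - 2⁻¹ * δ)⁻¹ * ‖x‖ ≤ (1 - 2⁻¹ * δ)⁻¹ * (1 - 2⁻¹ * δ) :=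
          mul_le_mul_of_nonneg_left hle (inv_nonneg.mpr hc.le)
      _ = 1 := inv_mul_cancel₀ hc.ne'
  · exfalso
    set n : ℝ := ‖x‖ with hn
    have hn0 : 0 < n := by
      have : (0:ℝ) < 1 - 2⁻¹ * δ := by linarith
      linarith
    set x1 : X := n⁻¹ • x with hx1def
    have hx1n : ‖x1‖ = 1 := by
      rw [hx1def, norm_smul, norm_inv, Real.norm_eq_abs, abs_of_pos hn0, ← hn,
        inv_mul_cancel₀ hn0.ne']
    -- pick a good finite-codimensional subspace Y
    have hF1 : δ ≤ Ffun X x1 t :=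
      aucMod_le_Ffun t ⟨x1, by rwa [mem_sphere_zero_iff_norm]⟩
    haveI hfcne := fcod_nonempty (X := X)
    have h2 : (3/4) * δ < Ffun X x1 t := by linarith
    obtain ⟨Y, hY⟩ := exists_lt_of_lt_ciSup
      (show (3/4) * δ < ⨆ Y : {Y : Submodule ℝ X // IsClosed (Y : Set X) ∧
        FiniteDimensional ℝ (X ⧸ Y)}, Gfun X x1 t Y from h2)
    -- points of the unit sphere of Y push the norm up
    have hsY : ∀ y : ↥Y.1, ‖y‖ = 1 → 1 + (3/4) * δ ≤ ‖x1 + t • (y : X)‖ := by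
      intro y hy
      have h3 : Gfun X x1 t Y ≤ ‖x1 + t • ((y : ↥Y.1) : X)‖ - 1 := by
        rw [Gfun]
        exact ciInf_le (Gfun_bddBelow x1 t Y) ⟨y, by rwa [mem_sphere_zero_iff_norm]⟩
      linarith
    -- extension to all vectors of Y of norm ≥ t
    have hextend : ∀ z : X, z ∈ Y.1 → t ≤ ‖z‖ → 1 + (3/4) * δ ≤ ‖x1 + z‖ := by
      intro z hz htz
      set s : ℝ := ‖z‖ with hs
      have hs0 : 0 < s := lt_of_lt_of_le ht htz
      have hw : ‖(⟨s⁻¹ • z, Y.1.smul_mem _ hz⟩ : ↥Y.1)‖ = 1 := by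
        show ‖s⁻¹ • z‖ = 1
        rw [norm_smul, norm_inv, Real.norm_eq_abs, abs_of_pos hs0, ← hs,
          inv_mul_cancel₀ hs0.ne']
      have h4 := hsY ⟨s⁻¹ • z, Y.1.smul_mem _ hz⟩ hw
      have hid : x1 + t • (s⁻¹ • z) = (t/s) • (x1 + z) + (1 - t/s) • x1 := by
        rw [smul_add, sub_smul, one_smul, smul_smul, div_eq_mul_inv]
        abel
      have hts0 : 0 < t/s := div_pos ht hs0
      have hts1 : t/s ≤ 1 := (div_le_one hs0).mpr htz
      have h5 : ‖x1 + t • (s⁻¹ • z)‖ ≤ (t/s) * ‖x1 + z‖ + (1 - t/s) := by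
        rw [hid]
        refine le_trans (norm_add_le _ _) ?_
        rw [norm_smul, norm_smul, Real.norm_eq_abs, Real.norm_eq_abs,
          abs_of_pos hts0, abs_of_nonneg (by linarith : (0:ℝ) ≤ 1 - t/s), hx1n, mul_one]
      have key : (3/4) * δ ≤ (t/s) * (‖x1 + z‖ - 1) := by nlinarith [h4, h5]
      have hN1 : 0 ≤ ‖x1 + z‖ - 1 := by
        by_contra hcon
        push_neg at hcon
        have : (t/s) * (‖x1 + z‖ - 1) < 0 := mul_neg_of_pos_of_neg hts0 (by linarith)
        linarith
      have key2 : (t/s) * (‖x1 + z‖ - 1) ≤ ‖x1 + z‖ - 1 :=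
        mul_le_of_le_one_left hN1 hts1
      linarith
    -- construct the weakly open set V
    haveI hYc : IsClosed (Y.1 : Set X) := Y.2.1
    haveI hYf : FiniteDimensional ℝ (X ⧸ Y.1) := Y.2.2
    set ρ : ℝ := δ/100 with hρ
    have hρ0 : 0 < ρ := by rw [hρ]; linarith
    obtain ⟨qC, hqC⟩ : ∃ q : X →L[ℝ] X ⧸ Y.1, ∀ z : X, q z = Submodule.Quotient.mk z :=
      ⟨LinearMap.mkContinuous Y.1.mkQ 1 (fun m => by
        simpa using Submodule.Quotient.norm_mk_le Y.1 m), fun z => rfl⟩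
    set V : Set X := ⇑qC ⁻¹' Metric.ball (qC x) ρ with hV
    have hVopen : IsWeaklyOpen V := by
      have hc := weakCont_findim (X := X) qC
      exact @Continuous.isOpen_preimage X (X ⧸ Y.1) (weakTop X) _ _ hc _ Metric.isOpen_ball
    have hxV : x ∈ V := by
      rw [hV, Set.mem_preimage]
      exact Metric.mem_ball_self hρ0
    -- diameter estimate
    have hpoint : ∀ u ∈ V ∩ Metric.closedBall (0 : X) 1, ‖u - x‖ ≤ t + 2*ρ := by
      intro u hu
      obtain ⟨huV, huB⟩ := hu
      have hu1 : ‖u‖ ≤ 1 := by rwa [mem_closedBall_zero_iff] at huB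
      have hq : ‖qC (u - x)‖ < ρ := by
        rw [hV, Set.mem_preimage, Metric.mem_ball, dist_eq_norm] at huV
        rwa [map_sub]
      obtain ⟨m, hm, hmn⟩ := Submodule.Quotient.norm_mk_lt (S := Y.1) (qC (u - x)) hρ0
      have hmem : (u - x) - m ∈ Y.1 := by
        rw [hqC] at hm
        have h := (Submodule.Quotient.eq Y.1).mp hm
        simpa [neg_sub] using Y.1.neg_mem h
      set y : X := (u - x) - m with hy
      have hmn2 : ‖m‖ < 2*ρ := by linarith
      have hylt : ‖y‖ < n * t := by
        by_contra hcon
        push_neg at hcon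
        have hyn : t ≤ ‖n⁻¹ • y‖ := by
          rw [norm_smul, norm_inv, Real.norm_eq_abs, abs_of_pos hn0]
          calc t = n⁻¹ * (n * t) := by field_simp
            _ ≤ n⁻¹ * ‖y‖ := mul_le_mul_of_nonneg_left hcon (inv_nonneg.mpr hn0.le)
        have h6 := hextend (n⁻¹ • y) (Y.1.smul_mem _ hmem) hyn
        have h7 : x + y = n • (x1 + n⁻¹ • y) := by
          rw [smul_add, hx1def, smul_inv_smul₀ hn0.ne', smul_inv_smul₀ hn0.ne']
        have h8 : n * (1 + (3/4) * δ) ≤ ‖x + y‖ := by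
          rw [h7, norm_smul, Real.norm_eq_abs, abs_of_pos hn0]
          exact mul_le_mul_of_nonneg_left h6 hn0.le
        have h10 : u - (u - (x + y)) = x + y := by abel
        have h11 : u - (x + y) = m := by rw [hy]; abel
        have h9 : ‖x + y‖ ≤ ‖u‖ + ‖m‖ := by
          have h12 := norm_sub_le u (u - (x + y))
          rwa [h10, h11] at h12
        have hprod : (1 - 2⁻¹ * δ) * (1 + (3/4) * δ) < n * (1 + (3/4) * δ) :=
          mul_lt_mul_of_pos_right hlt (by linarith)
        nlinarith [h8, h9, hmn2, hu1, hδ0, hδ13, hρ, mul_pos hδ0 hδ0,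
          mul_lt_mul_of_pos_left hδ13 hδ0]
      have huxy : u - x = y + m := by rw [hy]; abel
      have hnt : n * t ≤ t := by nlinarith [hx1, ht]
      calc ‖u - x‖ = ‖y + m‖ := by rw [huxy]
        _ ≤ ‖y‖ + ‖m‖ := norm_add_le _ _
        _ ≤ t + 2*ρ := by linarith
    have hdiam : Metric.diam (V ∩ Metric.closedBall (0 : X) 1) < ε := by
      have hbound : Metric.diam (V ∩ Metric.closedBall (0 : X) 1) ≤ 2*t + 4*ρ := by
        refine Metric.diam_le_of_forall_dist_le (by linarith) ?_
        intro u hu v hv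
        have h1 := hpoint u hu
        have h2 := hpoint v hv
        rw [dist_eq_norm]
        calc ‖u - v‖ = ‖(u - x) - (v - x)‖ := by congr 1; abel
          _ ≤ ‖u - x‖ + ‖v - x‖ := norm_sub_le _ _
          _ ≤ 2*t + 4*ρ := by linarith
      have hlt2 : 2*t + 4*ρ < ε := by
        rw [hρ, htdef]
        linarith
      linarith
    exact hxN (Set.mem_sUnion.mpr ⟨V, ⟨hVopen, hdiam⟩, hxV⟩)

end
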